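/- arXiv:1309.3392 — 2 statements merged into one kernel-verified Lean document; each statement's English description precedes it below -/
import Mathlib

section
/- Let k ≥ 2 and let (f_n) be a sequence of holomorphic automorphisms of ℂ^k, each with Jacobian determinant identically 1, converging uniformly on compact subsets of ℂ^k to a map F. Then: (i) F is injective and holomorphic; (ii) f_n^{−1} converges to F^{−1} uniformly on compact subsets of F(ℂ^k); (iii) ‖f_n^{−1}(z)‖ → ∞ uniformly on ℂ^k ∖ F(ℂ^k). -/
open Metric Set Filter Function
open scoped Topology NNReal

section DixonEsterleAux

variable {E F : Type*} [NormedAddCommGroup E] [NormedSpace ℂ E]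
  [NormedAddCommGroup F] [NormedSpace ℂ F] [CompleteSpace F]

/-- Cauchy estimate for the Fréchet derivative of an entire function. -/
lemma cauchy_fderiv_bound {g : E → F} (hg : Differentiable ℂ g) {z : E} {r M : ℝ}
    (hr : 0 < r) (hM : ∀ u ∈ closedBall z r, ‖g u‖ ≤ M) :
    ‖fderiv ℂ g z‖ ≤ M / r := by
  have hM0 : 0 ≤ M := le_trans (norm_nonneg _) (hM z (mem_closedBall_self hr.le))
  refine ContinuousLinearMap.opNorm_le_bound _ (div_nonneg hM0 hr.le) fun v => ?_
  rcases eq_or_ne v 0 with rfl | hv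
  · simp
  have hvpos : (0:ℝ) < ‖v‖ := norm_pos_iff.mpr hv
  set φ : ℂ → F := fun t => g (z + t • v) with hφ
  have hdφ : ∀ t : ℂ, HasDerivAt φ (fderiv ℂ g (z + t • v) v) t := by
    intro t
    have h1 : HasDerivAt (fun t : ℂ => z + t • v) v t := by
      simpa using ((hasDerivAt_id t).smul_const v).const_add z
    simpa [Function.comp_def] using ((hg _).hasFDerivAt.comp_hasDerivAt t h1)
  have hdiffφ : Differentiable ℂ φ := fun t => (hdφ t).differentiableAt
  have h0 : deriv φ 0 = fderiv ℂ g z v := by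
    have := (hdφ 0).deriv
    simpa using this
  set R : ℝ := r / ‖v‖ with hR
  have hRpos : 0 < R := div_pos hr hvpos
  have hle : ‖deriv φ 0‖ ≤ M / R := by
    refine Complex.norm_deriv_le_of_forall_mem_sphere_norm_le hRpos
      hdiffφ.diffContOnCl fun t ht => ?_
    refine hM _ ?_
    have h1 : ‖t‖ = R := by simpa [Complex.dist_eq] using ht
    simp only [mem_closedBall, dist_eq_norm, add_sub_cancel_left]
    rw [norm_smul, h1, hR, div_mul_cancel₀ _ hvpos.ne']
  rw [← h0]
  calc ‖deriv φ 0‖ ≤ M / R := hle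
    _ = M / r * ‖v‖ := by rw [hR]; field_simp

variable [ProperSpace E]

/-- Locally uniform limits of entire functions: the limit is entire and the derivatives
converge uniformly on compact sets. -/
lemma deriv_conv {f : ℕ → E → F} {F0 : E → F}
    (hdiff : ∀ n, Differentiable ℂ (f n))
    (hconv : ∀ C : Set E, IsCompact C → TendstoUniformlyOn f F0 atTop C) :
    Differentiable ℂ F0 ∧
      ∀ C : Set E, IsCompact C → TendstoUniformlyOn (fun n z => fderiv ℂ (f n) z)
        (fun z => fderiv ℂ F0 z) atTop C := by
  have key : ∀ K : Set E, IsCompact K → ∀ ε : ℝ, 0 < ε → ∃ N : ℕ, ∀ m ≥ N, ∀ n ≥ N,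
      ∀ z ∈ K, ‖fderiv ℂ (f m) z - fderiv ℂ (f n) z‖ ≤ ε := by
    intro K hK ε hε
    have hcau := (hconv (cthickening 1 K) (hK.cthickening)).uniformCauchySeqOn
    rw [Metric.uniformCauchySeqOn_iff] at hcau
    obtain ⟨N, hN⟩ := hcau ε hε
    refine ⟨N, fun m hm n hn z hz => ?_⟩
    have hdg : Differentiable ℂ (f m - f n) := (hdiff m).sub (hdiff n)
    have hbound : ∀ u ∈ closedBall z 1, ‖(f m - f n) u‖ ≤ ε := by
      intro u hu
      have : u ∈ cthickening 1 K := closedBall_subset_cthickening hz 1 hu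
      simpa [dist_eq_norm] using (hN m hm n hn u this).le
    have := cauchy_fderiv_bound hdg one_pos hbound
    rw [div_one] at this
    have heq : fderiv ℂ (f m - f n) z = fderiv ℂ (f m) z - fderiv ℂ (f n) z :=
      fderiv_sub (hdiff m z) (hdiff n z)
    rwa [heq] at this
  have hcauchy : ∀ z : E, CauchySeq (fun n => fderiv ℂ (f n) z) := by
    intro z
    rw [Metric.cauchySeq_iff]
    intro ε hε
    obtain ⟨N, hN⟩ := key {z} isCompact_singleton (ε/2) (half_pos hε)
    exact ⟨N, fun m hm n hn => by
      have := hN m hm n hn z rfl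
      rw [dist_eq_norm]
      linarith⟩
  set L : E → E →L[ℂ] F := fun z => limUnder atTop (fun n => fderiv ℂ (f n) z) with hLdef
  have hL : ∀ z : E, Tendsto (fun n => fderiv ℂ (f n) z) atTop (𝓝 (L z)) := fun z =>
    (hcauchy z).tendsto_limUnder
  have hunifL : ∀ K : Set E, IsCompact K →
      TendstoUniformlyOn (fun n z => fderiv ℂ (f n) z) L atTop K := by
    intro K hK
    rw [Metric.tendstoUniformlyOn_iff]
    intro ε hε
    obtain ⟨N, hN⟩ := key K hK (ε/2) (half_pos hε)
    refine eventually_atTop.2 ⟨N, fun n hn z hz => ?_⟩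
    have hlim : Tendsto (fun m => dist (fderiv ℂ (f m) z) (fderiv ℂ (f n) z)) atTop
        (𝓝 (dist (L z) (fderiv ℂ (f n) z))) := (hL z).dist tendsto_const_nhds
    have hle : dist (L z) (fderiv ℂ (f n) z) ≤ ε/2 := by
      refine le_of_tendsto hlim (eventually_atTop.2 ⟨N, fun m hm => ?_⟩)
      rw [dist_eq_norm]
      exact hN m hm n hn z hz
    calc dist (L z) (fderiv ℂ (f n) z) ≤ ε/2 := hle
      _ < ε := half_lt_self hε
  have hFd : ∀ z : E, HasFDerivAt F0 (L z) z := by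
    intro z
    exact hasFDerivAt_of_tendstoUniformlyOn isOpen_ball
      ((hunifL (closedBall z 1) (isCompact_closedBall z 1)).mono ball_subset_closedBall)
      (fun n x _ => (hdiff n x).hasFDerivAt)
      (fun x _ => (hconv {x} isCompact_singleton).tendsto_at rfl) (mem_ball_self one_pos)
  have hdF0 : Differentiable ℂ F0 := fun z => (hFd z).differentiableAt
  have hfe : (fun z => fderiv ℂ F0 z) = L := funext fun z => (hFd z).fderiv
  exact ⟨hdF0, fun C hC => by rw [hfe]; exact hunifL C hC⟩

/-- The derivative of an entire function on a proper space is continuous. -/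
lemma fderiv_cont {g : E → F} (hg : Differentiable ℂ g) : Continuous (fderiv ℂ g) := by
  rw [continuous_iff_continuousAt]
  intro x
  obtain ⟨M, hM⟩ : ∃ M, ∀ u ∈ closedBall x 4, ‖g u‖ ≤ M :=
    (isCompact_closedBall x 4).exists_bound_of_continuousOn hg.continuous.continuousOn
  have hDF : ∀ v ∈ closedBall x 3, ‖fderiv ℂ g v‖ ≤ M := by
    intro v hv
    have hsub : closedBall v 1 ⊆ closedBall x 4 := by
      refine closedBall_subset_closedBall' ?_
      rw [mem_closedBall] at hv
      linarith
    have := cauchy_fderiv_bound hg one_pos (fun u hu => hM u (hsub hu))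
    rwa [div_one] at this
  have hlip : ∀ u₁ ∈ closedBall x 3, ∀ u₂ ∈ closedBall x 3, ‖g u₁ - g u₂‖ ≤ M * ‖u₁ - u₂‖ :=
    fun u₁ h1 u₂ h2 => (convex_closedBall x 3).norm_image_sub_le_of_norm_fderiv_le
      (fun u _ => hg u) (fun u hu => hDF u hu) h2 h1
  refine continuousAt_of_locally_lipschitz one_half_pos M (fun w hw => ?_)
  set c : E := w - x with hc
  have hcn : ‖c‖ < 1/2 := by rwa [hc, ← dist_eq_norm]
  set h : E → F := fun u => g u - g (u + c) with hh
  have hdh : Differentiable ℂ h := hg.sub (hg.comp (differentiable_id.add_const c))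
  have hfd : fderiv ℂ h x = fderiv ℂ g x - fderiv ℂ g w := by
    have h1 : HasFDerivAt (fun u => g (u + c)) (fderiv ℂ g (x + c)) x := by
      have := (hg (x + c)).hasFDerivAt.comp x ((hasFDerivAt_id x).add_const c)
      simpa [Function.comp_def] using this
    have h2 : HasFDerivAt h (fderiv ℂ g x - fderiv ℂ g (x + c)) x :=
      (hg x).hasFDerivAt.sub h1
    rw [h2.fderiv]
    congr 2
    rw [hc]; abel
  have hb : ∀ u ∈ closedBall x 1, ‖h u‖ ≤ M * ‖c‖ := by
    intro u hu
    rw [mem_closedBall, dist_eq_norm] at hu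
    have hu1 : u ∈ closedBall x 3 := by
      rw [mem_closedBall, dist_eq_norm]; linarith
    have hu2 : u + c ∈ closedBall x 3 := by
      rw [mem_closedBall, dist_eq_norm]
      calc ‖u + c - x‖ ≤ ‖u - x‖ + ‖c‖ := by
            have : u + c - x = (u - x) + c := by abel
            rw [this]; exact norm_add_le _ _
        _ ≤ 3 := by linarith
    have := hlip u hu1 (u + c) hu2
    simpa using this
  have := cauchy_fderiv_bound hdh one_pos hb
  rw [div_one, hfd] at this
  rw [dist_eq_norm, dist_eq_norm, ← hc]
  calc ‖fderiv ℂ g w - fderiv ℂ g x‖ = ‖fderiv ℂ g x - fderiv ℂ g w‖ := norm_sub_rev _ _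
    _ ≤ M * ‖c‖ := this

end DixonEsterleAux

section SurjBall

variable {E : Type*} [NormedAddCommGroup E] [NormedSpace ℂ E]
  [CompleteSpace E] [ProperSpace E] [Nontrivial E]

/-- Quantitative local surjectivity, uniformly on a compact set, for entire maps whose
derivative is uniformly close to the derivative of a fixed map `F0` with everywhere
invertible derivative. -/
lemma surj_ball {F0 : E → E}
    (hDcont : Continuous (fderiv ℂ F0))
    (Φ : E → (E ≃L[ℂ] E)) (hΦ : ∀ x, ((Φ x) : E →L[ℂ] E) = fderiv ℂ F0 x)
    {K : Set E} (hK : IsCompact K) {ε : ℝ} (hε : 0 < ε) :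
    ∃ r ρ δ : ℝ, 0 < r ∧ r < ε ∧ 0 < ρ ∧ 0 < δ ∧
      ∀ g : E → E, Differentiable ℂ g →
        (∀ u ∈ cthickening 2 K, ‖fderiv ℂ g u - fderiv ℂ F0 u‖ ≤ δ) →
        ∀ y ∈ K, closedBall (g y) ρ ⊆ g '' closedBall y r := by
  classical
  set ν : E → ℝ := fun x => ‖((Φ x).symm : E →L[ℂ] E)‖ with hν
  have hνc : Continuous ν := by
    have h2 : ν = fun y => ‖Ring.inverse (fderiv ℂ F0 y)‖ := by
      funext y
      rw [hν, ← hΦ y, ContinuousLinearMap.ringInverse_eq_inverse,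
        ContinuousLinearMap.inverse_equiv]
    rw [h2]
    refine Continuous.norm ?_
    rw [continuous_iff_continuousAt]
    intro x
    have h3 : ContinuousAt (Ring.inverse : (E →L[ℂ] E) → (E →L[ℂ] E)) (fderiv ℂ F0 x) := by
      have : fderiv ℂ F0 x = ((Φ x).toUnit : E →L[ℂ] E) := (hΦ x).symm
      rw [this]
      exact NormedRing.inverse_continuousAt ((Φ x).toUnit)
    exact h3.comp hDcont.continuousAt
  set K' : Set E := cthickening 2 K with hK'
  have hK'c : IsCompact K' := hK.cthickening
  obtain ⟨C, hC⟩ : ∃ C, ∀ x ∈ K', ‖ν x‖ ≤ C :=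
    hK'c.exists_bound_of_continuousOn hνc.continuousOn
  set M : ℝ := max C 0 + 1 with hM
  have hMpos : 0 < M := by positivity
  have hνlt : ∀ x ∈ K', ν x < M := by
    intro x hx
    have := le_trans (le_abs_self _) (hC x hx)
    have h4 : C ≤ max C 0 := le_max_left _ _
    rw [hM]; linarith
  have hνpos : ∀ x : E, 0 < ν x := by
    intro x
    rw [hν]
    rw [norm_pos_iff]
    intro hzero
    obtain ⟨v, hv⟩ := exists_ne (0 : E)
    have : ((Φ x).symm : E →L[ℂ] E) ((Φ x) v) = 0 := by rw [hzero]; rfl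
    simp only [ContinuousLinearEquiv.coe_coe, ContinuousLinearEquiv.symm_apply_apply] at this
    exact hv this
  have huc := hK'c.uniformContinuousOn_of_continuous hDcont.continuousOn
  rw [Metric.uniformContinuousOn_iff] at huc
  obtain ⟨δ₀, hδ₀, hucd⟩ := huc ((8*M)⁻¹) (by positivity)
  set r : ℝ := min (min (ε/2) 1) (δ₀/2) with hr
  have hrpos : 0 < r := lt_min (lt_min (half_pos hε) one_pos) (half_pos hδ₀)
  have hrε : r < ε := lt_of_le_of_lt (le_trans (min_le_left _ _) (min_le_left _ _)) (half_lt_self hε)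
  have hr1 : r ≤ 1 := le_trans (min_le_left _ _) (min_le_right _ _)
  have hrδ : r < δ₀ := lt_of_le_of_lt (min_le_right _ _) (half_lt_self hδ₀)
  refine ⟨r, r / (2*M), (8*M)⁻¹, hrpos, hrε, by positivity, by positivity,
    fun g hg hgd y hy => ?_⟩
  have hball : closedBall y r ⊆ K' := by
    rw [hK']
    exact (closedBall_subset_closedBall (by linarith)).trans (closedBall_subset_cthickening hy 2)
  have hyK' : y ∈ K' := self_subset_cthickening K hy
  set c : ℝ≥0 := Real.toNNReal ((4*M)⁻¹) with hcdef
  have hcoe : (c : ℝ) = (4*M)⁻¹ := Real.coe_toNNReal _ (by positivity)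
  have happrox : ApproximatesLinearOn g ((Φ y) : E →L[ℂ] E) (closedBall y r) c := by
    intro p hp q hq
    have hdh : Differentiable ℂ (fun u => g u - ((Φ y) : E →L[ℂ] E) u) :=
      hg.sub ((Φ y) : E →L[ℂ] E).differentiable
    have hder : ∀ u ∈ closedBall y r,
        ‖fderiv ℂ (fun u => g u - ((Φ y) : E →L[ℂ] E) u) u‖ ≤ (4*M)⁻¹ := by
      intro u hu
      have heq : fderiv ℂ (fun u => g u - ((Φ y) : E →L[ℂ] E) u) u
          = fderiv ℂ g u - ((Φ y) : E →L[ℂ] E) := by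
        have h1 : HasFDerivAt (fun u => g u - ((Φ y) : E →L[ℂ] E) u)
            (fderiv ℂ g u - ((Φ y) : E →L[ℂ] E)) u :=
          (hg u).hasFDerivAt.sub (((Φ y) : E →L[ℂ] E).hasFDerivAt)
        exact h1.fderiv
      rw [heq, hΦ y]
      have huK' : u ∈ K' := hball hu
      have h5 : ‖fderiv ℂ g u - fderiv ℂ F0 u‖ ≤ (8*M)⁻¹ := hgd u huK'
      have h6 : ‖fderiv ℂ F0 u - fderiv ℂ F0 y‖ ≤ (8*M)⁻¹ := by
        have hd : dist u y < δ₀ := lt_of_le_of_lt (mem_closedBall.mp hu) hrδ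
        have := hucd u huK' y hyK' hd
        rw [dist_eq_norm] at this
        exact this.le
      calc ‖fderiv ℂ g u - fderiv ℂ F0 y‖
          ≤ ‖fderiv ℂ g u - fderiv ℂ F0 u‖ + ‖fderiv ℂ F0 u - fderiv ℂ F0 y‖ :=
            norm_sub_le_norm_sub_add_norm_sub _ _ _
        _ ≤ (8*M)⁻¹ + (8*M)⁻¹ := add_le_add h5 h6
        _ = (4*M)⁻¹ := by field_simp; ring
    have hmv := (convex_closedBall y r).norm_image_sub_le_of_norm_fderiv_le
      (fun u _ => hdh u) hder hq hp
    have heq2 : (g p - ((Φ y) : E →L[ℂ] E) p) - (g q - ((Φ y) : E →L[ℂ] E) q)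
        = g p - g q - ((Φ y) : E →L[ℂ] E) (p - q) := by
      rw [map_sub]; abel
    rw [heq2] at hmv
    rw [hcoe]
    exact hmv
  have hsurjOn := happrox.surjOn_closedBall_of_nonlinearRightInverse
    ((Φ y).toNonlinearRightInverse) hrpos.le (subset_refl _)
  have hnn : (((Φ y).toNonlinearRightInverse.nnnorm : ℝ)) = ν y := rfl
  refine Subset.trans (closedBall_subset_closedBall ?_) hsurjOn
  rw [hnn, hcoe]
  have h7 : ν y < M := hνlt y hyK'
  have h8 : (0:ℝ) < ν y := hνpos y
  have h9 : M⁻¹ ≤ (ν y)⁻¹ := inv_anti₀ h8 h7.le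
  have h10 : (1:ℝ)/(2*M) ≤ (ν y)⁻¹ - (4*M)⁻¹ := by
    have : (1:ℝ)/(2*M) ≤ M⁻¹ - (4*M)⁻¹ := by
      rw [div_le_iff₀ (by positivity)]
      field_simp
      nlinarith [hMpos]
    linarith
  calc r / (2*M) = (1/(2*M)) * r := by ring
    _ ≤ ((ν y)⁻¹ - (4*M)⁻¹) * r := mul_le_mul_of_nonneg_right h10 hrpos.le

end SurjBall

/-- Lemma 2.1 of the paper, after Dixon–Esterle: properties of the limit
of a sequence of volume-preserving automorphisms of `ℂ^k`. -/
theorem stmt5 (k : ℕ) (hk : 2 ≤ k) (f : ℕ → ((Fin k → ℂ) ≃ (Fin k → ℂ)))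
    (hdiff : ∀ n, Differentiable ℂ (f n)) (hdiffinv : ∀ n, Differentiable ℂ (f n).symm)
    (hdet : ∀ n, ∀ z : Fin k → ℂ, LinearMap.det (fderiv ℂ (⇑(f n)) z).toLinearMap = 1)
    (F : (Fin k → ℂ) → (Fin k → ℂ))
    (hconv : ∀ C : Set (Fin k → ℂ), IsCompact C →
      TendstoUniformlyOn (fun n => ⇑(f n)) F Filter.atTop C) :
    Function.Injective F ∧ Differentiable ℂ F ∧
    (∃ G : (Fin k → ℂ) → (Fin k → ℂ), (∀ z : Fin k → ℂ, G (F z) = z) ∧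
      ∀ C : Set (Fin k → ℂ), C ⊆ Set.range F → IsCompact C →
        TendstoUniformlyOn (fun n => ⇑(f n).symm) G Filter.atTop C) ∧
    (∀ R : ℝ, ∃ N : ℕ, ∀ n ≥ N, ∀ z : Fin k → ℂ, z ∉ Set.range F → R ≤ ‖(f n).symm z‖) := by
  classical
  haveI : Nonempty (Fin k) := ⟨⟨0, by omega⟩⟩
  obtain ⟨hdF, hdconv⟩ := deriv_conv (f := fun n => ⇑(f n)) (F0 := F) hdiff hconv
  have hDcont : Continuous (fderiv ℂ F) := fderiv_cont hdF
  -- determinant of the limit derivative is 1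
  have hdet' : ∀ z, (fderiv ℂ F z).det = 1 := by
    intro z
    have h1 : Tendsto (fun n => fderiv ℂ (⇑(f n)) z) atTop (𝓝 (fderiv ℂ F z)) :=
      (hdconv {z} isCompact_singleton).tendsto_at rfl
    have h2 : Tendsto (fun n => (fderiv ℂ (⇑(f n)) z).det) atTop (𝓝 ((fderiv ℂ F z).det)) :=
      (ContinuousLinearMap.continuous_det.tendsto _).comp h1
    have h3 : (fun n => (fderiv ℂ (⇑(f n)) z).det) = fun _ => (1:ℂ) :=
      funext fun n => hdet n z
    rw [h3] at h2
    exact (tendsto_nhds_unique h2 tendsto_const_nhds)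
  have hdetne : ∀ z, (fderiv ℂ F z).det ≠ 0 := fun z => by rw [hdet' z]; exact one_ne_zero
  set Φ : (Fin k → ℂ) → ((Fin k → ℂ) ≃L[ℂ] (Fin k → ℂ)) :=
    fun z => (fderiv ℂ F z).toContinuousLinearEquivOfDetNeZero (hdetne z) with hΦdef
  have hΦ : ∀ z, ((Φ z) : (Fin k → ℂ) →L[ℂ] (Fin k → ℂ)) = fderiv ℂ F z := fun z =>
    ContinuousLinearMap.coe_toContinuousLinearEquivOfDetNeZero _ _
  -- helper: eventual uniform closeness of derivatives
  have hDclose : ∀ (K : Set (Fin k → ℂ)), IsCompact K → ∀ δ : ℝ, 0 < δ →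
      ∀ᶠ n in atTop, ∀ u ∈ cthickening 2 K, ‖fderiv ℂ (⇑(f n)) u - fderiv ℂ F u‖ ≤ δ := by
    intro K hK δ hδ
    have := hdconv (cthickening 2 K) hK.cthickening
    rw [Metric.tendstoUniformlyOn_iff] at this
    filter_upwards [this δ hδ] with n hn u hu
    have h := hn u hu
    rw [dist_eq_norm, norm_sub_rev] at h
    exact h.le
  have hFclose : ∀ (K : Set (Fin k → ℂ)), IsCompact K → ∀ ρ : ℝ, 0 < ρ →
      ∀ᶠ n in atTop, ∀ x ∈ K, dist (F x) (f n x) < ρ := by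
    intro K hK ρ hρ
    have := hconv K hK
    rw [Metric.tendstoUniformlyOn_iff] at this
    exact this ρ hρ
  -- injectivity
  have hinj : Function.Injective F := by
    intro a b hab
    by_contra hne
    have hd : 0 < dist a b := dist_pos.mpr hne
    have hKab : IsCompact ({a, b} : Set (Fin k → ℂ)) := ((Set.finite_singleton b).insert a).isCompact
    obtain ⟨r, ρ, δ, hr, hrε, hρ, hδ, hsurj⟩ := surj_ball hDcont Φ hΦ hKab (half_pos hd)
    obtain ⟨n, hn1, hn2⟩ := ((hDclose _ hKab δ hδ).and (hFclose _ hKab ρ hρ)).exists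
    have hsa := hsurj (⇑(f n)) (hdiff n) hn1 a (by simp)
    have hsb := hsurj (⇑(f n)) (hdiff n) hn1 b (by simp)
    have hwa : F a ∈ closedBall (f n a) ρ := by
      rw [mem_closedBall]
      exact (hn2 a (by simp)).le
    have hwb : F a ∈ closedBall (f n b) ρ := by
      rw [mem_closedBall, hab]
      exact (hn2 b (by simp)).le
    obtain ⟨u, hu, hua⟩ := hsa hwa
    obtain ⟨v, hv, hvb⟩ := hsb hwb
    have huv : u = v := (f n).injective (by rw [hua, hvb])
    rw [mem_closedBall] at hu hv
    have htri : dist a b ≤ dist u a + dist u b := by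
      rw [dist_comm u a]
      exact dist_triangle a u b
    rw [huv] at hu
    rw [huv] at htri
    linarith
  -- the inverse function
  set G : (Fin k → ℂ) → (Fin k → ℂ) := Function.invFun F with hGdef
  have hGF : ∀ z, G (F z) = z := fun z => Function.leftInverse_invFun hinj z
  have hFG : ∀ w ∈ range F, F (G w) = w := fun w hw => Function.invFun_eq hw
  have hC1 : ContDiff ℂ 1 F := contDiff_one_iff_fderiv.mpr ⟨hdF, hDcont⟩
  have hGcont : ∀ w ∈ range F, ContinuousAt G w := by
    rintro w ⟨x, rfl⟩
    have hstrict : HasStrictFDerivAt F ((Φ x : (Fin k → ℂ) →L[ℂ] (Fin k → ℂ))) x := by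
      rw [hΦ x]
      exact hC1.contDiffAt.hasStrictFDerivAt one_ne_zero
    set H := hstrict.toOpenPartialHomeomorph F with hHdef
    have hHcoe : ⇑H = F := hstrict.toOpenPartialHomeomorph_coe
    have hsrc : x ∈ H.source := hstrict.mem_toOpenPartialHomeomorph_source
    have htgt : F x ∈ H.target := hstrict.image_mem_toOpenPartialHomeomorph_target
    have hopen : IsOpen H.target := H.open_target
    have heq : ∀ᶠ w' in 𝓝 (F x), H.symm w' = G w' := by
      filter_upwards [hopen.mem_nhds htgt] with w' hw'
      have h1 : F (H.symm w') = w' := by rw [← hHcoe]; exact H.right_inv hw'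
      conv_rhs => rw [← h1]
      rw [hGF]
    have hsc : ContinuousAt (H.symm) (F x) := H.continuousAt_symm htgt
    exact hsc.congr heq
  refine ⟨hinj, hdF, ⟨G, hGF, ?_⟩, ?_⟩
  · -- part (ii)
    intro C hsub hcomp
    rw [Metric.tendstoUniformlyOn_iff]
    intro ε hε
    have hKc : IsCompact (G '' C) := hcomp.image_of_continuousOn
      (fun w hw => (hGcont w (hsub hw)).continuousWithinAt)
    obtain ⟨r, ρ, δ, hr, hrε, hρ, hδ, hsurj⟩ := surj_ball hDcont Φ hΦ hKc hε
    filter_upwards [hDclose _ hKc δ hδ, hFclose _ hKc ρ hρ] with n hn1 hn2 z hz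
    have hx : G z ∈ G '' C := mem_image_of_mem _ hz
    have hFx : F (G z) = z := hFG z (hsub hz)
    have hzball : z ∈ closedBall (f n (G z)) ρ := by
      rw [mem_closedBall]
      have := hn2 _ hx
      rw [hFx] at this
      exact this.le
    obtain ⟨u, hu, huz⟩ := hsurj (⇑(f n)) (hdiff n) hn1 (G z) hx hzball
    have hinvu : (f n).symm z = u := by rw [← huz]; exact (f n).symm_apply_apply u
    rw [hinvu]
    calc dist (G z) u ≤ r := by rw [dist_comm]; exact mem_closedBall.mp hu
      _ < ε := hrε
  · -- part (iii)
    intro R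
    rcases le_or_gt R 0 with hR | hR
    · exact ⟨0, fun n _ z _ => le_trans hR (norm_nonneg _)⟩
    obtain ⟨r, ρ, δ, hr, hrε, hρ, hδ, hsurj⟩ :=
      surj_ball hDcont Φ hΦ (isCompact_closedBall (0 : Fin k → ℂ) R) one_pos
    have hFsurj := hsurj F hdF (fun u _ => by simpa using hδ.le)
    obtain ⟨N, hN⟩ := eventually_atTop.mp
      (hFclose _ (isCompact_closedBall (0 : Fin k → ℂ) R) ρ hρ)
    refine ⟨N, fun n hn z hz => ?_⟩
    by_contra hlt
    push_neg at hlt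
    set x := (f n).symm z with hxdef
    have hxball : x ∈ closedBall (0 : Fin k → ℂ) R := by
      rw [mem_closedBall, dist_zero_right]
      exact hlt.le
    have hfnx : f n x = z := (f n).apply_symm_apply z
    have hzmem : z ∈ closedBall (F x) ρ := by
      rw [mem_closedBall]
      have := hN n hn x hxball
      rw [dist_comm] at this
      rw [← hfnx]
      exact this.le
    obtain ⟨u, _, hu⟩ := hFsurj x hxball hzmem
    exact hz ⟨u, hu⟩
end

section
/- Ω ∩ {z ∈ ℂ^k : Re π_j(z) > 0 for all 1 ≤ j ≤ k} = ∅. -/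
/-- The total extension of the piecewise translation `P^n` of the paper: on the region
`Y^n(i_1,…,i_k)` it subtracts the vector `(i_k, i_1, …, i_{k-1})`, where for `1 ≤ j ≤ k-1`
one has `i_j = 1` iff `Re z_j > n`, and `i_k = 1` iff `Re z_k > c` with `c = n` if
`i_{k-1} = 1` and `c = n - 1` otherwise. -/
noncomputable def Pfull (k : ℕ) (n : ℕ) (z : Fin k → ℂ) : Fin k → ℂ := fun t =>
  if (t : ℕ) = 0 then
    z t - (if ((if (n : ℝ) < (z ⟨k - 2, Nat.sub_lt t.pos (by norm_num)⟩).re then (n : ℝ)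
        else (n : ℝ) - 1) < (z ⟨k - 1, Nat.sub_lt t.pos (by norm_num)⟩).re) then 1 else 0)
  else
    z t - (if (n : ℝ) < (z ⟨(t : ℕ) - 1, Nat.lt_of_le_of_lt (Nat.sub_le _ _) t.isLt⟩).re
      then 1 else 0)

/-- For `z ∈ Δ(l_1,…,l_k)` this computes `l_z = max {l_1,…,l_k}`. -/
noncomputable def lmax (k : ℕ) (z : Fin k → ℂ) : ℕ :=
  Finset.univ.sup fun t : Fin k =>
    if (t : ℕ) = k - 1 then (⌈(z t).re⌉).toNat else max 1 (⌈(z t).re⌉).toNat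

/-- `Scomp k n = P^1 ∘ P^2 ∘ ⋯ ∘ P^n` (total extensions). -/
noncomputable def Scomp (k : ℕ) : ℕ → (Fin k → ℂ) → (Fin k → ℂ)
  | 0 => id
  | n + 1 => Scomp k n ∘ Pfull k (n + 1)

/-- The map `S = P^1 ∘ P^2 ∘ ⋯ ∘ P^{l_z}`. -/
noncomputable def Sfull (k : ℕ) (z : Fin k → ℂ) : Fin k → ℂ := Scomp k (lmax k z) z

/-- The cell `Δ(l_1,…,l_k)`; the last index is allowed to be `0`. -/
def DeltaSet (k : ℕ) (l : Fin k → ℕ) : Set (Fin k → ℂ) :=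
  {z | ∀ t : Fin k,
    if (t : ℕ) = k - 1 then
      (if l t = 0 then (z t).re < 0 else ((l t : ℝ) - 1 < (z t).re ∧ (z t).re < l t))
    else
      (if l t ≤ 1 then (z t).re < 1 else ((l t : ℝ) - 1 < (z t).re ∧ (z t).re < l t))}

/-- `Δ̃`, the union of all the cells `Δ(l_1,…,l_k)` with `l_j ≥ 1` for `j ≤ k-1`, `l_k ≥ 0`. -/
def DeltaTilde (k : ℕ) : Set (Fin k → ℂ) :=
  ⋃ l ∈ {l : Fin k → ℕ | ∀ t : Fin k, (t : ℕ) ≠ k - 1 → 1 ≤ l t}, DeltaSet k l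

/-! ### Auxiliary combinatorial model -/

/-- The combinatorial shadow of `Pfull` acting on cell-index vectors.  State `s t` means:
`Re z t < 0` if `s t = 0`; `Re z t < 1` if `s t = 1` (and additionally `Re z t > 0` if `t`
is the last coordinate); and `Re z t ∈ (s t - 1, s t)` if `s t ≥ 2`. -/
def Gc (k : ℕ) (n : ℕ) (s : Fin k → ℕ) : Fin k → ℕ := fun t =>
  if (t : ℕ) = 0 then
    s t - (if ((if n < s ⟨k - 2, Nat.sub_lt t.pos (by norm_num)⟩ then n
        else n - 1) < s ⟨k - 1, Nat.sub_lt t.pos (by norm_num)⟩) then 1 else 0)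
  else
    s t - (if n < s ⟨(t : ℕ) - 1, Nat.lt_of_le_of_lt (Nat.sub_le _ _) t.isLt⟩
      then 1 else 0)

/-- `z` lies in the (generalized) cell described by `s`. -/
def Rrel (k : ℕ) (s : Fin k → ℕ) (z : Fin k → ℂ) : Prop :=
  ∀ t : Fin k, (z t).re < s t ∧
    ((if (t : ℕ) = k - 1 then 1 else 2) ≤ s t → (s t : ℝ) - 1 < (z t).re)

lemma Gc_le (k n : ℕ) (s : Fin k → ℕ) (t : Fin k) : Gc k n s t ≤ s t := by
  unfold Gc
  split <;> exact Nat.sub_le _ _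

open Fin.NatCast in
/-- Invariant step: if some coordinate of `s` is `≤ n` then after the step `G_n` some
coordinate is `< n`. -/
lemma inv_step (k n : ℕ) (hk : 2 ≤ k) (hn : 1 ≤ n) (s : Fin k → ℕ)
    (h : ∃ j, s j ≤ n) : ∃ j, Gc k n s j < n := by
  haveI : NeZero k := ⟨by omega⟩
  by_cases hall : ∀ t, s t ≤ n
  · set L : Fin k := ⟨k - 1, by omega⟩ with hL
    set Z : Fin k := ⟨0, by omega⟩ with hZ
    by_cases hLlt : s L < n
    · exact ⟨L, lt_of_le_of_lt (Gc_le k n s L) hLlt⟩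
    · have hLn : s L = n := le_antisymm (hall L) (not_lt.mp hLlt)
      refine ⟨Z, ?_⟩
      have hc : Gc k n s Z = s Z - 1 := by
        unfold Gc
        rw [if_pos (show ((Z : ℕ) = 0) from rfl)]
        rw [if_neg (not_lt.mpr (hall _))]
        rw [if_pos]
        show n - 1 < s (⟨k - 1, _⟩ : Fin k)
        have : s (⟨k - 1, Nat.sub_lt Z.pos (by norm_num)⟩ : Fin k) = s L := rfl
        rw [this, hLn]; omega
      rw [hc]
      have := hall Z
      omega
  · push_neg at hall
    obtain ⟨b, hb⟩ := hall
    obtain ⟨a, ha⟩ := h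
    have cross : ∃ j : Fin k, s j ≤ n ∧ n < s (j - 1) := by
      by_contra hc
      push_neg at hc
      have hiter : ∀ m : ℕ, s (a - (m : Fin k)) ≤ n := by
        intro m
        induction m with
        | zero => simpa using ha
        | succ i ih =>
          have e : a - ((i + 1 : ℕ) : Fin k) = (a - (i : Fin k)) - 1 := by
            push_cast
            exact sub_add_eq_sub_sub _ _ _
          rw [e]
          exact hc _ ih
      have h2 := hiter ((a - b).val)
      rw [Fin.cast_val_eq_self (a - b), sub_sub_cancel] at h2
      omega
    obtain ⟨j, hj1, hj2⟩ := cross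
    by_cases hjlt : s j < n
    · exact ⟨j, lt_of_le_of_lt (Gc_le k n s j) hjlt⟩
    · have hjn : s j = n := le_antisymm hj1 (not_lt.mp hjlt)
      refine ⟨j, ?_⟩
      by_cases hj0 : (j : ℕ) = 0
      · have h1 : ((1 : Fin k) : ℕ) = 1 := by
          rw [Fin.val_one']; exact Nat.mod_eq_of_lt (by omega)
        have hpred : ((j - 1 : Fin k) : ℕ) = k - 1 := by
          rw [Fin.sub_def]
          simp only [Fin.val_mk, h1, hj0, Nat.add_zero]
          exact Nat.mod_eq_of_lt (by omega)
        have hsl : n < s (⟨k - 1, Nat.sub_lt j.pos (by norm_num)⟩ : Fin k) := by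
          have : (⟨k - 1, Nat.sub_lt j.pos (by norm_num)⟩ : Fin k) = j - 1 :=
            Fin.ext (by simp [hpred])
          rw [this]; exact hj2
        have hcond : (if n < s ⟨k - 2, Nat.sub_lt j.pos (by norm_num)⟩ then n
            else n - 1) < s ⟨k - 1, Nat.sub_lt j.pos (by norm_num)⟩ := by
          split
          · exact hsl
          · exact lt_of_le_of_lt (Nat.sub_le n 1) hsl
        have hc : Gc k n s j = s j - 1 := by
          unfold Gc
          rw [if_pos hj0, if_pos hcond]
        rw [hc, hjn]; omega
      · have h1 : ((1 : Fin k) : ℕ) = 1 := by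
          rw [Fin.val_one']; exact Nat.mod_eq_of_lt (by omega)
        have hpred : ((j - 1 : Fin k) : ℕ) = (j : ℕ) - 1 := by
          rw [Fin.sub_def]
          simp only [Fin.val_mk, h1]
          have e : k - 1 + (j : ℕ) = ((j : ℕ) - 1) + k := by omega
          rw [e, Nat.add_mod_right]
          exact Nat.mod_eq_of_lt (by omega)
        have hsl : n < s (⟨(j : ℕ) - 1, Nat.lt_of_le_of_lt (Nat.sub_le _ _) j.isLt⟩ : Fin k) := by
          have : (⟨(j : ℕ) - 1, Nat.lt_of_le_of_lt (Nat.sub_le _ _) j.isLt⟩ : Fin k) = j - 1 :=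
            Fin.ext (by simp [hpred])
          rw [this]; exact hj2
        have hc : Gc k n s j = s j - 1 := by
          unfold Gc
          rw [if_neg hj0, if_pos hsl]
        rw [hc, hjn]; omega

/-- One coordinate of the semiconjugacy: subtracting `1` moves a point of cell `s t`
into cell `s t - 1`. -/
lemma cell_dec (k : ℕ) (s : Fin k → ℕ) (z : Fin k → ℂ) (t : Fin k)
    (h1 : (z t).re < s t)
    (h2 : (if (t : ℕ) = k - 1 then 1 else 2) ≤ s t → (s t : ℝ) - 1 < (z t).re) :
    (z t - 1).re < (s t - 1 : ℕ) ∧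
      ((if (t : ℕ) = k - 1 then 1 else 2) ≤ s t - 1 → ((s t - 1 : ℕ) : ℝ) - 1 < (z t - 1).re) := by
  have hre : (z t - 1).re = (z t).re - 1 := by
    simp [Complex.sub_re, Complex.one_re]
  rcases Nat.eq_zero_or_pos (s t) with h0 | hpos
  · rw [h0] at h1 ⊢
    constructor
    · simp only [hre]
      push_cast at h1 ⊢
      linarith
    · intro habs
      exfalso
      split at habs <;> omega
  · have hcast : ((s t - 1 : ℕ) : ℝ) = (s t : ℝ) - 1 := by
      rw [Nat.cast_sub hpos, Nat.cast_one]
    constructor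
    · rw [hre, hcast]
      linarith
    · intro hth
      have hth' : (if (t : ℕ) = k - 1 then 1 else 2) ≤ s t := le_trans hth (Nat.sub_le _ _)
      have := h2 hth'
      -- need the *stronger* lower bound: since threshold ≤ s t - 1, s t ≥ threshold + 1
      rw [hre, hcast]
      linarith

/-- Semiconjugacy: `Pfull` on cells behaves like `Gc`. -/
lemma Rstep (k n : ℕ) (hk : 2 ≤ k) (hn : 1 ≤ n) (s : Fin k → ℕ) (z : Fin k → ℂ)
    (h : Rrel k s z) : Rrel k (Gc k n s) (Pfull k n z) := by
  have iffB : ∀ u : Fin k, (u : ℕ) = k - 1 → ∀ c : ℕ, ((c : ℝ) < (z u).re ↔ c < s u) := by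
    intro u hu c
    constructor
    · intro hcr
      by_contra hcn
      push_neg at hcn
      have h1 := (h u).1
      have : (s u : ℝ) ≤ c := by exact_mod_cast hcn
      linarith
    · intro hcs
      have hlb := (h u).2 (by rw [if_pos hu]; omega)
      have : (c : ℝ) ≤ (s u : ℝ) - 1 := by
        have : (c + 1 : ℕ) ≤ s u := hcs
        have := (Nat.cast_le (α := ℝ)).mpr this
        push_cast at this
        linarith
      linarith
  have iffA : ∀ u : Fin k, (u : ℕ) ≠ k - 1 → ∀ c : ℕ, 1 ≤ c →
      ((c : ℝ) < (z u).re ↔ c < s u) := by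
    intro u hu c hc
    constructor
    · intro hcr
      by_contra hcn
      push_neg at hcn
      have h1 := (h u).1
      have : (s u : ℝ) ≤ c := by exact_mod_cast hcn
      linarith
    · intro hcs
      have hlb := (h u).2 (by rw [if_neg hu]; omega)
      have : (c : ℝ) ≤ (s u : ℝ) - 1 := by
        have : (c + 1 : ℕ) ≤ s u := hcs
        have := (Nat.cast_le (α := ℝ)).mpr this
        push_cast at this
        linarith
      linarith
  intro t
  by_cases ht0 : (t : ℕ) = 0
  · -- the wrap-around coordinate
    set u2 : Fin k := ⟨k - 2, Nat.sub_lt t.pos (by norm_num)⟩ with hu2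
    set u1 : Fin k := ⟨k - 1, Nat.sub_lt t.pos (by norm_num)⟩ with hu1
    have hu2ne : (u2 : ℕ) ≠ k - 1 := by simp only [hu2]; omega
    have hu1eq : (u1 : ℕ) = k - 1 := rfl
    have hinner : ((n : ℝ) < (z u2).re ↔ n < s u2) := iffA u2 hu2ne n hn
    -- the outer condition matches
    have houter : (((if (n : ℝ) < (z u2).re then (n : ℝ) else (n : ℝ) - 1) < (z u1).re) ↔
        ((if n < s u2 then n else n - 1) < s u1)) := by
      by_cases hin : n < s u2
      · rw [if_pos hin, if_pos (hinner.mpr hin)]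
        exact iffB u1 hu1eq n
      · rw [if_neg hin, if_neg (fun hr => hin (hinner.mp hr))]
        have hcast : ((n - 1 : ℕ) : ℝ) = (n : ℝ) - 1 := by
          rw [Nat.cast_sub hn, Nat.cast_one]
        rw [← hcast]
        exact iffB u1 hu1eq (n - 1)
    by_cases hcond : (if n < s u2 then n else n - 1) < s u1
    · have hP : Pfull k n z t = z t - 1 := by
        unfold Pfull
        rw [if_pos ht0, if_pos (houter.mpr hcond)]
      have hG : Gc k n s t = s t - 1 := by
        unfold Gc
        rw [if_pos ht0, if_pos hcond]
      rw [hP, hG]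
      exact cell_dec k s z t (h t).1 (h t).2
    · have hP : Pfull k n z t = z t := by
        unfold Pfull
        rw [if_pos ht0, if_neg (fun hr => hcond (houter.mp hr))]
        simp
      have hG : Gc k n s t = s t := by
        unfold Gc
        rw [if_pos ht0, if_neg hcond]
        simp
      rw [hP, hG]
      exact h t
  · -- ordinary coordinate: compare with predecessor `t - 1`
    set u : Fin k := ⟨(t : ℕ) - 1, Nat.lt_of_le_of_lt (Nat.sub_le _ _) t.isLt⟩ with hu
    have hune : (u : ℕ) ≠ k - 1 := by
      have : (t : ℕ) < k := t.isLt
      simp only [hu]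
      omega
    have hiff : ((n : ℝ) < (z u).re ↔ n < s u) := iffA u hune n hn
    by_cases hcond : n < s u
    · have hP : Pfull k n z t = z t - 1 := by
        unfold Pfull
        rw [if_neg ht0, if_pos (hiff.mpr hcond)]
      have hG : Gc k n s t = s t - 1 := by
        unfold Gc
        rw [if_neg ht0, if_pos hcond]
      rw [hP, hG]
      exact cell_dec k s z t (h t).1 (h t).2
    · have hP : Pfull k n z t = z t := by
        unfold Pfull
        rw [if_neg ht0, if_neg (fun hr => hcond (hiff.mp hr))]
        simp
      have hG : Gc k n s t = s t := by
        unfold Gc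
        rw [if_neg ht0, if_neg hcond]
        simp
      rw [hP, hG]
      exact h t

/-- Main induction: if `z` lies in a cell having some index `≤ m`, then after `m` steps some
coordinate has negative real part. -/
lemma key (k : ℕ) (hk : 2 ≤ k) :
    ∀ (m : ℕ) (s : Fin k → ℕ) (z : Fin k → ℂ), Rrel k s z → (∃ j, s j ≤ m) →
      ∃ j, ((Scomp k m z) j).re < 0 := by
  intro m
  induction m with
  | zero =>
    rintro s z hR ⟨j, hj⟩
    refine ⟨j, ?_⟩
    have h1 := (hR j).1
    have hj0 : s j = 0 := Nat.le_zero.mp hj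
    rw [hj0] at h1
    simpa [Scomp] using h1
  | succ m ih =>
    rintro s z hR ⟨j, hj⟩
    have h1 : Rrel k (Gc k (m + 1) s) (Pfull k (m + 1) z) :=
      Rstep k (m + 1) hk (by omega) s z hR
    obtain ⟨j', hj'⟩ := inv_step k (m + 1) hk (by omega) s ⟨j, hj⟩
    have := ih (Gc k (m + 1) s) (Pfull k (m + 1) z) h1 ⟨j', by omega⟩
    simpa [Scomp] using this

/-- Lemma 2.3 of the paper: `Ω = S(Δ̃)` misses the positive octant. -/
theorem stmt7 (k : ℕ) (hk : 2 ≤ k) :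
    (Sfull k '' DeltaTilde k) ∩ {z : Fin k → ℂ | ∀ j : Fin k, 0 < (z j).re} = ∅ := by
  rw [Set.eq_empty_iff_forall_notMem]
  rintro w ⟨⟨z, hz, rfl⟩, hpos⟩
  simp only [DeltaTilde, Set.mem_iUnion, Set.mem_setOf_eq, exists_prop] at hz
  obtain ⟨l, hladm, hzl⟩ := hz
  -- `z` lies in the generalized cell `l`
  have hR : Rrel k l z := by
    intro t
    have hd := hzl t
    by_cases ht : (t : ℕ) = k - 1
    · rw [if_pos ht] at hd
      rw [if_pos ht]
      by_cases h0 : l t = 0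
      · rw [if_pos h0] at hd
        rw [h0]
        refine ⟨by simpa using hd, by omega⟩
      · rw [if_neg h0] at hd
        exact ⟨hd.2, fun _ => hd.1⟩
    · rw [if_neg ht] at hd
      rw [if_neg ht]
      have hadm : 1 ≤ l t := hladm t ht
      by_cases h1 : l t ≤ 1
      · rw [if_pos h1] at hd
        have : l t = 1 := le_antisymm h1 hadm
        rw [this]
        refine ⟨by simpa using hd, by omega⟩
      · rw [if_neg h1] at hd
        exact ⟨hd.2, fun _ => hd.1⟩
  -- the first cell index is at most `lmax k z`
  have hle : l ⟨0, by omega⟩ ≤ lmax k z := by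
    set t0 : Fin k := ⟨0, by omega⟩ with ht0
    have ht0ne : (t0 : ℕ) ≠ k - 1 := by simp only [ht0]; omega
    have hterm : l t0 ≤ (if (t0 : ℕ) = k - 1 then (⌈(z t0).re⌉).toNat
        else max 1 (⌈(z t0).re⌉).toNat) := by
      rw [if_neg ht0ne]
      by_cases h1 : l t0 ≤ 1
      · exact le_trans h1 (le_max_left _ _)
      · have hd := hzl t0
        rw [if_neg ht0ne, if_neg h1] at hd
        have hlb : (((l t0 : ℤ) - 1 : ℤ) : ℝ) < (z t0).re := by
          push_cast
          exact_mod_cast hd.1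
        have : ((l t0 : ℤ) - 1) < ⌈(z t0).re⌉ := Int.lt_ceil.mpr hlb
        have : (l t0 : ℤ) ≤ ⌈(z t0).re⌉ := by omega
        have : l t0 ≤ (⌈(z t0).re⌉).toNat := by omega
        exact le_trans this (le_max_right _ _)
    exact le_trans hterm (Finset.le_sup (f := fun t : Fin k =>
      if (t : ℕ) = k - 1 then (⌈(z t).re⌉).toNat else max 1 (⌈(z t).re⌉).toNat)
      (Finset.mem_univ t0))
  obtain ⟨j, hj⟩ := key k hk (lmax k z) l z hR ⟨⟨0, by omega⟩, hle⟩
  have hS : Sfull k z = Scomp k (lmax k z) z := rfl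
  have := hpos j
  rw [hS] at this
  linarith
end
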